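/- Fix integer k and reals γ > 3 k^{-1} log_2 k with k ≥ 8. If r = γ 2^k ln 2, there exists α_M with 0 < α_M ≤ 2^{-γk}(1 + 4 γ k^2 2^{-γk} ln 2) such that -ln α_M - 2^{-k} r k (1 - k α_M) = 0. -/

import Mathlib

/-- For `k ≥ 8` and `γ > 3 k⁻¹ log₂ k`, with `r = γ 2^k ln 2`, there exists
`α_M` with `0 < α_M ≤ 2^{-γk}(1 + 4γk² 2^{-γk} ln 2)` such that
`-ln α_M - 2^{-k} r k (1 - k α_M) = 0`. -/
theorem exists_alphaM (k : ℕ) (hk : 8 ≤ k) (γ : ℝ)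
    (hγ : 3 * Real.logb 2 k / k < γ) :
    ∃ αM : ℝ, 0 < αM ∧
      αM ≤ (2 : ℝ) ^ (-(γ * k)) *
        (1 + 4 * γ * (k : ℝ) ^ 2 * (2 : ℝ) ^ (-(γ * k)) * Real.log 2) ∧
      -Real.log αM -
        (2 : ℝ) ^ (-(k : ℝ)) * (γ * 2 ^ k * Real.log 2) * k * (1 - k * αM) = 0 := by
  have hk8 : (8 : ℝ) ≤ (k : ℝ) := by exact_mod_cast hk
  have hkpos : (0 : ℝ) < k := by linarith
  have hlog2 : (0 : ℝ) < Real.log 2 := Real.log_pos (by norm_num)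
  have hlog2lt : Real.log 2 < 0.6931471808 := Real.log_two_lt_d9
  have hlog2gt : (0.6931471803 : ℝ) < Real.log 2 := Real.log_two_gt_d9
  -- logb 2 k ≥ 3
  have hlogb8 : Real.logb 2 8 = 3 := by
    rw [show (8 : ℝ) = 2 ^ (3 : ℕ) by norm_num, Real.logb, Real.log_pow]
    field_simp
    norm_num
  have hlogk3 : (3 : ℝ) ≤ Real.logb 2 (k : ℝ) := by
    rw [← hlogb8]
    exact Real.logb_le_logb_of_le (by norm_num) (by norm_num) hk8
  set t : ℝ := γ * k with ht_def
  clear_value t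
  have ht9 : (9 : ℝ) < t := by
    have h1 : 3 * Real.logb 2 k < γ * k := by
      have := (div_lt_iff₀ hkpos).mp hγ
      linarith
    linarith
  have hγpos : 0 < γ := by
    have h0 : 0 < γ * k := by rw [← ht_def]; linarith
    by_contra h
    push_neg at h
    nlinarith
  -- k ≤ 2^(t/3)
  have hklog : Real.logb 2 (k : ℝ) < t / 3 := by
    have h1 : 3 * Real.logb 2 k < γ * k := by
      have := (div_lt_iff₀ hkpos).mp hγ
      linarith
    linarith
  have hkle : (k : ℝ) ≤ (2 : ℝ) ^ (t / 3) := by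
    have h1 : (k : ℝ) = (2 : ℝ) ^ (Real.logb 2 (k : ℝ)) :=
      (Real.rpow_logb two_pos (by norm_num) hkpos).symm
    rw [h1]
    exact Real.rpow_le_rpow_of_exponent_le one_le_two hklog.le
  set A : ℝ := (2 : ℝ) ^ (-t) with hA_def
  clear_value A
  have hApos : 0 < A := by rw [hA_def]; positivity
  -- key bound : γ * k^2 * A ≤ 9/64
  have key : γ * (k : ℝ) ^ 2 * A ≤ 9 / 64 := by
    have hγk2 : γ * (k : ℝ) ^ 2 = t * k := by rw [ht_def]; ring
    have step1 : t * k * A ≤ t * ((2 : ℝ) ^ (t / 3) * A) := by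
      have : t * (k : ℝ) ≤ t * (2 : ℝ) ^ (t / 3) :=
        mul_le_mul_of_nonneg_left hkle (by linarith)
      calc t * k * A ≤ t * (2 : ℝ) ^ (t / 3) * A :=
            mul_le_mul_of_nonneg_right this hApos.le
        _ = t * ((2 : ℝ) ^ (t / 3) * A) := by ring
    have h2 : (2 : ℝ) ^ (t / 3) * A = (2 : ℝ) ^ (-(2 * t / 3)) := by
      rw [hA_def, ← Real.rpow_add two_pos]
      ring_nf
    -- t ≤ 9/64 * 2^(2t/3)
    have h3 : (2 : ℝ) ^ (2 * t / 3) = 64 * (2 : ℝ) ^ (2 * t / 3 - 6) := by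
      rw [show (64 : ℝ) = (2 : ℝ) ^ ((6 : ℕ) : ℝ) by
        rw [Real.rpow_natCast]; norm_num, ← Real.rpow_add two_pos]
      norm_num
    have h4 : 1 + (2 * t / 3 - 6) * Real.log 2 ≤ (2 : ℝ) ^ (2 * t / 3 - 6) := by
      rw [Real.rpow_def_of_pos two_pos]
      have := Real.add_one_le_exp (Real.log 2 * (2 * t / 3 - 6))
      linarith [this]
    have h5 : t ≤ 9 / 64 * (2 : ℝ) ^ (2 * t / 3) := by
      rw [h3]
      have harg : (0 : ℝ) ≤ 2 * t / 3 - 6 := by linarith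
      nlinarith [h4, harg, hlog2gt]
    have h6 : t * (2 : ℝ) ^ (-(2 * t / 3)) ≤ 9 / 64 := by
      have hpos : (0 : ℝ) < (2 : ℝ) ^ (-(2 * t / 3)) := Real.rpow_pos_of_pos two_pos _
      have hmul : (2 : ℝ) ^ (2 * t / 3) * (2 : ℝ) ^ (-(2 * t / 3)) = 1 := by
        rw [← Real.rpow_add two_pos]; norm_num
      calc t * (2 : ℝ) ^ (-(2 * t / 3))
          ≤ 9 / 64 * (2 : ℝ) ^ (2 * t / 3) * (2 : ℝ) ^ (-(2 * t / 3)) :=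
            mul_le_mul_of_nonneg_right h5 hpos.le
        _ = 9 / 64 * ((2 : ℝ) ^ (2 * t / 3) * (2 : ℝ) ^ (-(2 * t / 3))) := by ring
        _ = 9 / 64 := by rw [hmul]; ring
    calc γ * (k : ℝ) ^ 2 * A = t * k * A := by rw [hγk2]
      _ ≤ t * ((2 : ℝ) ^ (t / 3) * A) := step1
      _ = t * (2 : ℝ) ^ (-(2 * t / 3)) := by rw [h2]
      _ ≤ 9 / 64 := h6
  set θ : ℝ := γ * (k : ℝ) ^ 2 * A * Real.log 2 with hθ_def
  clear_value θ
  have hθpos : 0 < θ := by rw [hθ_def]; positivity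
  have hθle : θ ≤ 1 / 4 := by
    have : γ * (k : ℝ) ^ 2 * A * Real.log 2 ≤ 9 / 64 * Real.log 2 :=
      mul_le_mul_of_nonneg_right key hlog2.le
    nlinarith
  set B : ℝ := A * (1 + 4 * θ) with hB_def
  clear_value B
  have hAB : A ≤ B := by nlinarith
  have hBpos : 0 < B := by nlinarith
  clear hkle hklog key hγ hlogb8 hlogk3
  -- the function
  set g : ℝ → ℝ := fun α => -Real.log α - γ * k * Real.log 2 * (1 - k * α) with hg_def
  clear_value g
  have hlogA : Real.log A = -t * Real.log 2 := by
    rw [hA_def, Real.log_rpow two_pos]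
  have hgA : g A = θ := by
    simp only [hg_def, hθ_def, hlogA, ht_def]
    ring
  have hgB : g B = θ * (1 + 4 * θ) - Real.log (1 + 4 * θ) := by
    simp only [hg_def, hB_def]
    rw [Real.log_mul hApos.ne' (by nlinarith), hlogA]
    rw [hθ_def, ht_def]
    ring
  have hgB_le : g B ≤ 0 := by
    rw [hgB]
    have h1pos : (0 : ℝ) < 1 + 4 * θ := by linarith
    -- log (1 + 4θ) ≥ 4θ/(1+4θ)
    have hlog_lb : 4 * θ / (1 + 4 * θ) ≤ Real.log (1 + 4 * θ) := by
      have h2 := Real.log_le_sub_one_of_pos (inv_pos.mpr h1pos)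
      rw [Real.log_inv] at h2
      have heq : (1 + 4 * θ)⁻¹ = 1 - 4 * θ / (1 + 4 * θ) := by
        field_simp
        ring
      rw [heq] at h2
      linarith
    have hfrac : θ * (1 + 4 * θ) ≤ 4 * θ / (1 + 4 * θ) := by
      rw [le_div_iff₀ h1pos]
      clear * - hθpos hθle
      nlinarith [sq_nonneg θ]
    clear * - hlog_lb hfrac
    linarith
  -- IVT
  have hcont : ContinuousOn g (Set.Icc A B) := by
    rw [hg_def]
    apply ContinuousOn.sub
    · apply ContinuousOn.neg
      apply Real.continuousOn_log.mono
      intro x hx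
      simp only [Set.mem_compl_iff, Set.mem_singleton_iff]
      have := hx.1
      intro h; rw [h] at this; linarith
    · exact Continuous.continuousOn (continuous_const.mul (continuous_const.sub (continuous_const.mul continuous_id)))
  have hmem : (0 : ℝ) ∈ Set.Icc (g B) (g A) := by
    constructor
    · exact hgB_le
    · rw [hgA]; exact hθpos.le
  obtain ⟨αM, hαM_mem, hαM_eq⟩ := intermediate_value_Icc' hAB hcont hmem
  refine ⟨αM, ?_, ?_, ?_⟩
  · exact lt_of_lt_of_le hApos hαM_mem.1
  · refine le_trans hαM_mem.2 (le_of_eq ?_)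
    rw [hB_def, hθ_def, hA_def, ht_def]
    ring
  · have hpow : (2 : ℝ) ^ (-(k : ℝ)) * (2 : ℝ) ^ k = 1 := by
      rw [← Real.rpow_natCast 2 k, ← Real.rpow_add two_pos]
      simp
    rw [hg_def] at hαM_eq
    have hfeq : -Real.log αM - γ * k * Real.log 2 * (1 - k * αM) = 0 := hαM_eq
    have hrw : (2 : ℝ) ^ (-(k : ℝ)) * (γ * 2 ^ k * Real.log 2) * k * (1 - k * αM)
        = γ * k * Real.log 2 * (1 - k * αM) := by
      have : (2 : ℝ) ^ (-(k : ℝ)) * (γ * 2 ^ k * Real.log 2) * k * (1 - k * αM)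
          = ((2 : ℝ) ^ (-(k : ℝ)) * (2 : ℝ) ^ k) * (γ * k * Real.log 2 * (1 - k * αM)) := by
        ring
      rw [this, hpow, one_mul]
    rw [hrw]
    exact hfeq
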